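/- (Claim 1, second part.) Assume t_s + t_k ≤ t_e. If (p, q) is P1-feasible and q ≤ 1/2, then (t_s + t_k) F(p) ≥ (1−q) t_e ≥ t_e/2, and consequently F(p) ≥ 1/2. -/
import Mathlib


/-- Feasibility for problem (P1). -/
def P1Feasible (πlo πhi tk te ts : ℝ) (F : ℝ → ℝ) (p q : ℝ) : Prop :=
  πlo ≤ p ∧ p ≤ πhi ∧ 0 ≤ q ∧ q ≤ 1 ∧ 0 < F p ∧
  (1 - q) * te * (1 - F p) ≤ tk ∧
  tk * (1 - F p) + (1 - q) * te * F p ≤ ts * F p ∧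
  q * te ≤ ts

/-- (Claim 1, second part.) If `t_s + t_k ≤ t_e`, `(p, q)` is P1-feasible and `q ≤ 1/2`,
then `(t_s + t_k) F(p) ≥ (1−q) t_e ≥ t_e/2`, and consequently `F(p) ≥ 1/2`. -/
theorem stmt_4
    (πlo πhi : ℝ) (f F : ℝ → ℝ)
    (hπlo : 0 ≤ πlo) (hlt : πlo < πhi)
    (hcont : ContinuousOn f (Set.Icc πlo πhi))
    (hnn : ∀ x ∈ Set.Icc πlo πhi, 0 ≤ f x)
    (hanti : ∀ x ∈ Set.Icc πlo πhi, ∀ y ∈ Set.Icc πlo πhi, x ≤ y → f y ≤ f x)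
    (hone : (∫ x in πlo..πhi, f x) = 1)
    (hF : ∀ p, F p = ∫ x in πlo..p, f x)
    (tk te ts : ℝ) (htk : 0 < tk) (hte : 0 < te) (hts : 0 < ts)
    (hle : ts + tk ≤ te)
    (p q : ℝ)
    (hfeas : P1Feasible πlo πhi tk te ts F p q)
    (hq : q ≤ 1 / 2) :
    (1 - q) * te ≤ (ts + tk) * F p ∧ te / 2 ≤ (1 - q) * te ∧ 1 / 2 ≤ F p := by
  obtain ⟨h1,h2,h3,h4,h5,h6,h7,h8⟩ := hfeas
  refine ⟨by nlinarith, by nlinarith, by nlinarith⟩
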